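/- Let α_1,…,α_r ∈ ℂ be rationally independent but rationally dependent with 1, and let θ^(1),…,θ^(r) ∈ ℤ^n be ℚ-linearly independent. Then [φ] = [Σ_{k=1}^r α_k θ^(k)] has toric degree r−1 or r. -/

import Mathlib

open scoped BigOperators
open Complex

noncomputable section

/-- `φ` (a representative of a class in `(ℂ/ℤ)^n`) is represented by toric
coefficients `α` and toric vectors `θ`, i.e. `[φ] = [∑ k, α k • θ k]`. -/
def IsToricRep {n r : ℕ} (φ : Fin n → ℂ) (α : Fin r → ℂ) (θ : Fin r → Fin n → ℤ) : Prop :=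
  ∀ j, ∃ m : ℤ, φ j - ∑ k, α k * (θ k j : ℂ) = (m : ℂ)

/-- `[φ]` has toric degree `r`: `r` is the minimal length of a toric representation. -/
def HasToricDegree {n : ℕ} (φ : Fin n → ℂ) (r : ℕ) : Prop :=
  (∃ (α : Fin r → ℂ) (θ : Fin r → Fin n → ℤ), IsToricRep φ α θ) ∧
  ∀ s : ℕ, (∃ (α : Fin s → ℂ) (θ : Fin s → Fin n → ℤ), IsToricRep φ α θ) → r ≤ s

/-- `α₁, …, α_r` are rationally independent together with `1`. -/
def RatIndepWithOne {r : ℕ} (α : Fin r → ℂ) : Prop :=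
  ∀ (c0 : ℤ) (c : Fin r → ℤ), (c0 : ℂ) + ∑ k, (c k : ℂ) * α k = 0 → c0 = 0 ∧ ∀ k, c k = 0

/-- `α₁, …, α_r` are rationally independent. -/
def RatIndep {r : ℕ} (α : Fin r → ℂ) : Prop :=
  ∀ c : Fin r → ℤ, ∑ k, (c k : ℂ) * α k = 0 → ∀ k, c k = 0

/-- Additive resonances of `θ ∈ ℤ^n` relative to the `j`-th coordinate. -/
def ResPlus {n : ℕ} (θ : Fin n → ℤ) (j : Fin n) : Set (Fin n → ℕ) :=
  {Q | 2 ≤ ∑ h, Q h ∧ ∑ h, (Q h : ℤ) * θ h = θ j}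

/-- Multiplicative resonances of `[φ] ∈ (ℂ/ℤ)^n` relative to the `j`-th coordinate. -/
def ResMod {n : ℕ} (φ : Fin n → ℂ) (j : Fin n) : Set (Fin n → ℕ) :=
  {Q | 2 ≤ ∑ h, Q h ∧ ∃ m : ℤ, (∑ h, (Q h : ℂ) * φ h) - φ j = (m : ℂ)}

/-- Rational independence with integer coefficients gives `ℚ`-linear independence. -/
lemma ratIndep_linearIndependent {r : ℕ} {α : Fin r → ℂ} (hα : RatIndep α) :
    LinearIndependent ℚ α := by
  rw [← LinearIndependent.iff_fractionRing ℤ ℚ, Fintype.linearIndependent_iff]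
  intro g hg
  apply hα g
  simpa [zsmul_eq_mul] using hg

/-- Key dimension bound: any toric representation of `∑ α_k θ^(k)` of length `s`
satisfies `r ≤ s + 1`. -/
lemma key_bound {n r s : ℕ} (α : Fin r → ℂ) (hαli : LinearIndependent ℚ α)
    (θ : Fin r → Fin n → ℤ)
    (hθ : LinearIndependent ℚ (fun k : Fin r => fun j : Fin n => (θ k j : ℚ)))
    (β : Fin s → ℂ) (η : Fin s → Fin n → ℤ)
    (hrep : IsToricRep (fun j => ∑ k, α k * (θ k j : ℂ)) β η) : r ≤ s + 1 := by
  classical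
  set φ : Fin n → ℂ := fun j => ∑ k, α k * (θ k j : ℂ) with hφ
  set A : Matrix (Fin r) (Fin n) ℚ := fun k j => (θ k j : ℚ) with hA
  have hArank : A.rank = r := by
    have := hθ.rank_matrix (M := A)
    simpa using this
  -- the linear map `c ↦ ∑ c k • α k`
  set L : (Fin r → ℚ) →ₗ[ℚ] ℂ :=
    ∑ k, LinearMap.smulRight (LinearMap.proj k) (α k) with hLdef
  have hL : ∀ c : Fin r → ℚ, L c = ∑ k, c k • α k := by
    intro c
    simp [hLdef, LinearMap.sum_apply]
  have hkerL : LinearMap.ker L = ⊥ := by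
    rw [LinearMap.ker_eq_bot']
    intro c hc
    have h0 : ∑ k, c k • α k = 0 := by rw [← hL]; exact hc
    have := Fintype.linearIndependent_iff.mp hαli c h0
    funext k; exact this k
  set T : (Fin n → ℚ) →ₗ[ℚ] ℂ := L ∘ₗ A.mulVecLin with hT
  have hTj : ∀ j, T (Pi.single j 1) = φ j := by
    intro j
    have : A.mulVecLin (Pi.single j 1) = fun k => A k j := by
      simp [Matrix.mulVecLin_apply]
      rfl
    rw [hT, LinearMap.comp_apply, this, hL, hφ]
    refine Finset.sum_congr rfl fun k _ => ?_
    rw [Rat.smul_def]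
    push_cast [hA]
    ring
  have hrange : LinearMap.range T = Submodule.span ℚ (Set.range φ) := by
    apply le_antisymm
    · rintro x ⟨v, rfl⟩
      have hv : v = ∑ j, v j • (Pi.single j (1 : ℚ) : Fin n → ℚ) := by
        funext i
        simp [Pi.single_apply, Finset.sum_apply]
      rw [hv, map_sum]
      refine Submodule.sum_mem _ fun j _ => ?_
      rw [map_smul, hTj]
      exact Submodule.smul_mem _ _ (Submodule.subset_span ⟨j, rfl⟩)
    · rw [Submodule.span_le]
      rintro x ⟨j, rfl⟩
      exact ⟨Pi.single j 1, hTj j⟩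
  have hkerT : LinearMap.ker T = LinearMap.ker A.mulVecLin := by
    rw [hT, LinearMap.ker_comp, hkerL, Submodule.comap_bot]
  have hfinrank : Module.finrank ℚ (LinearMap.range T) = r := by
    have h1 := LinearMap.finrank_range_add_finrank_ker T
    have h2 := LinearMap.finrank_range_add_finrank_ker A.mulVecLin
    rw [hkerT] at h1
    have : Module.finrank ℚ (LinearMap.range T)
        = Module.finrank ℚ (LinearMap.range A.mulVecLin) := by omega
    rw [this]
    exact hArank
  -- the span of `1` and the `β`'s
  set V : Submodule ℚ ℂ :=
    Submodule.span ℚ (Set.range (Fin.cons (1 : ℂ) β : Fin (s + 1) → ℂ)) with hV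
  haveI : FiniteDimensional ℚ V :=
    FiniteDimensional.span_of_finite ℚ (Set.finite_range _)
  have hle : LinearMap.range T ≤ V := by
    rw [hrange, Submodule.span_le]
    rintro x ⟨j, rfl⟩
    obtain ⟨m, hm⟩ := hrep j
    have hφj : φ j = ∑ l, ((η l j : ℚ)) • β l + ((m : ℚ)) • (1 : ℂ) := by
      have h' : φ j = (m : ℂ) + ∑ l, β l * (η l j : ℂ) := by
        have := sub_eq_iff_eq_add.mp hm
        simpa [hφ] using this
      rw [h']
      rw [add_comm]
      congr 1
      · refine Finset.sum_congr rfl fun l _ => ?_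
        rw [Rat.smul_def]
        push_cast
        ring
      · rw [Rat.smul_def]
        push_cast
        ring
    rw [hφj]
    refine Submodule.add_mem _ (Submodule.sum_mem _ fun l _ => Submodule.smul_mem _ _
      (Submodule.subset_span ⟨l.succ, by simp⟩)) (Submodule.smul_mem _ _
      (Submodule.subset_span ⟨0, by simp⟩))
  have hVle : Module.finrank ℚ V ≤ s + 1 := by
    have := finrank_range_le_card (R := ℚ) (Fin.cons (1 : ℂ) β : Fin (s + 1) → ℂ)
    simpa [Set.finrank, hV] using this
  have := Submodule.finrank_mono hle
  omega

/-- If `α₁,…,α_r` are rationally independent but rationally dependent with `1`, and the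
`θ^(k)` are `ℚ`-linearly independent, then `[∑ α_k θ^(k)]` has toric degree `r-1` or `r`. -/
theorem stmt10 (n r : ℕ) (α : Fin r → ℂ) (hα : RatIndep α)
    (hdep : ∃ (c : Fin r → ℤ) (c0 : ℤ), (¬ (c0 = 0 ∧ ∀ k, c k = 0)) ∧
      ∑ k, (c k : ℂ) * α k = (c0 : ℂ))
    (θ : Fin r → Fin n → ℤ)
    (hθ : LinearIndependent ℚ (fun k : Fin r => fun j : Fin n => (θ k j : ℚ))) :
    ∃ s : ℕ, (s = r - 1 ∨ s = r) ∧
      HasToricDegree (fun j => ∑ k, α k * (θ k j : ℂ)) s := by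
  classical
  set φ : Fin n → ℂ := fun j => ∑ k, α k * (θ k j : ℂ) with hφ
  have hPr : ∃ (β : Fin r → ℂ) (η : Fin r → Fin n → ℤ), IsToricRep φ β η :=
    ⟨α, θ, fun j => ⟨0, by simp [hφ]⟩⟩
  have hex : ∃ s : ℕ, ∃ (β : Fin s → ℂ) (η : Fin s → Fin n → ℤ), IsToricRep φ β η := ⟨r, hPr⟩
  have hαli : LinearIndependent ℚ α := ratIndep_linearIndependent hα
  refine ⟨Nat.find hex, ?_, Nat.find_spec hex, fun s hs => Nat.find_le hs⟩
  have h1 : Nat.find hex ≤ r := Nat.find_le hPr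
  have h2 : r ≤ Nat.find hex + 1 := by
    obtain ⟨β, η, hβ⟩ := Nat.find_spec hex
    exact key_bound α hαli θ hθ β η hβ
  omega
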